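/- The matrices A = [[2,1],[1,1]] and B = [[1,1],[1,2]] in SL(2,ℝ) generate a discrete group; in particular, the subgroup they generate contains no nontrivial elements of finite order (it is torsion-free). -/

import Mathlib

open Matrix

/-- The matrix `[[2,1],[1,1]]` as an element of `SL(2,ℝ)`. -/
def matA : Matrix.SpecialLinearGroup (Fin 2) ℝ :=
  ⟨!![2, 1; 1, 1], by norm_num [Matrix.det_fin_two_of]⟩

/-- The matrix `[[1,1],[1,2]]` as an element of `SL(2,ℝ)`. -/
def matB : Matrix.SpecialLinearGroup (Fin 2) ℝ :=
  ⟨!![1, 1; 1, 2], by norm_num [Matrix.det_fin_two_of]⟩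

/-! ### Auxiliary definitions -/

abbrev M2Z := Matrix (Fin 2) (Fin 2) ℤ

def Az : Matrix.SpecialLinearGroup (Fin 2) ℤ :=
  ⟨!![2, 1; 1, 1], by norm_num [Matrix.det_fin_two_of]⟩

def Bz : Matrix.SpecialLinearGroup (Fin 2) ℤ :=
  ⟨!![1, 1; 1, 2], by norm_num [Matrix.det_fin_two_of]⟩

def Az' : Matrix.SpecialLinearGroup (Fin 2) ℤ :=
  ⟨!![1, -1; -1, 2], by norm_num [Matrix.det_fin_two_of]⟩

def Bz' : Matrix.SpecialLinearGroup (Fin 2) ℤ :=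
  ⟨!![2, -1; -1, 1], by norm_num [Matrix.det_fin_two_of]⟩

lemma Az_inv : Az⁻¹ = Az' := by
  rw [inv_eq_iff_mul_eq_one]
  ext i j
  rw [Matrix.SpecialLinearGroup.coe_mul]
  fin_cases i <;> fin_cases j <;>
    simp [Az, Az', Matrix.mul_apply, Fin.sum_univ_two]

lemma Bz_inv : Bz⁻¹ = Bz' := by
  rw [inv_eq_iff_mul_eq_one]
  ext i j
  rw [Matrix.SpecialLinearGroup.coe_mul]
  fin_cases i <;> fin_cases j <;>
    simp [Bz, Bz', Matrix.mul_apply, Fin.sum_univ_two]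
/-! ### Nat-encoded matrices mod 12 and mod 9 -/

def mulc (m x y : Nat) : Nat :=
  let a := x % m; let b := x / m % m; let c := x / (m*m) % m; let d := x / (m*m*m) % m
  let e := y % m; let f := y / m % m; let g := y / (m*m) % m; let h := y / (m*m*m) % m
  (a*e+b*g) % m + m*((a*f+b*h) % m) + (m*m)*((c*e+d*g) % m) + (m*m*m)*((c*f+d*h) % m)

def trc (m k : Nat) : Nat := (k % m + k / (m*m*m) % m) % m

lemma mulc12_eq (x y : ℕ) :
    mulc 12 x y = (x%12 * (y%12) + x/12%12 * (y/144%12)) % 12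
      + 12 * ((x%12 * (y/12%12) + x/12%12 * (y/1728%12)) % 12)
      + 144 * ((x/144%12 * (y%12) + x/1728%12 * (y/144%12)) % 12)
      + 1728 * ((x/144%12 * (y/12%12) + x/1728%12 * (y/1728%12)) % 12) := by
  simp only [mulc]

lemma mulc9_eq (x y : ℕ) :
    mulc 9 x y = (x%9 * (y%9) + x/9%9 * (y/81%9)) % 9
      + 9 * ((x%9 * (y/9%9) + x/9%9 * (y/729%9)) % 9)
      + 81 * ((x/81%9 * (y%9) + x/729%9 * (y/81%9)) % 9)
      + 729 * ((x/81%9 * (y/9%9) + x/729%9 * (y/729%9)) % 9) := by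
  simp only [mulc]

def dec12 (k : Nat) : Matrix (Fin 2) (Fin 2) (ZMod 12) :=
  !![((k % 12 : ℕ) : ZMod 12), ((k / 12 % 12 : ℕ) : ZMod 12);
     ((k / 144 % 12 : ℕ) : ZMod 12), ((k / 1728 % 12 : ℕ) : ZMod 12)]

def dec9 (k : Nat) : Matrix (Fin 2) (Fin 2) (ZMod 9) :=
  !![((k % 9 : ℕ) : ZMod 9), ((k / 9 % 9 : ℕ) : ZMod 9);
     ((k / 81 % 9 : ℕ) : ZMod 9), ((k / 729 % 9 : ℕ) : ZMod 9)]

def enc12 (u : Matrix (Fin 2) (Fin 2) (ZMod 12)) : Nat :=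
  (u 0 0).val + 12 * (u 0 1).val + 144 * (u 1 0).val + 1728 * (u 1 1).val

def enc9 (u : Matrix (Fin 2) (Fin 2) (ZMod 9)) : Nat :=
  (u 0 0).val + 9 * (u 0 1).val + 81 * (u 1 0).val + 729 * (u 1 1).val

lemma dec12_mul (a b : ℕ) : dec12 (mulc 12 a b) = dec12 a * dec12 b := by
  have h0 : mulc 12 a b % 12 = (a%12 * (b%12) + a/12%12 * (b/144%12)) % 12 := by
    simp only [mulc]; norm_num; omega
  have h1 : mulc 12 a b / 12 % 12 = (a%12 * (b/12%12) + a/12%12 * (b/1728%12)) % 12 := by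
    simp only [mulc]; norm_num; omega
  have h2 : mulc 12 a b / 144 % 12 = (a/144%12 * (b%12) + a/1728%12 * (b/144%12)) % 12 := by
    simp only [mulc]; norm_num; omega
  have h3 : mulc 12 a b / 1728 % 12 = (a/144%12 * (b/12%12) + a/1728%12 * (b/1728%12)) % 12 := by
    simp only [mulc]; norm_num; omega
  have c0 : ((mulc 12 a b % 12 : ℕ) : ZMod 12)
      = ↑(a%12) * ↑(b%12) + ↑(a/12%12) * ↑(b/144%12) := by
    rw [h0, ZMod.natCast_mod]; push_cast; ring
  have c1 : ((mulc 12 a b / 12 % 12 : ℕ) : ZMod 12)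
      = ↑(a%12) * ↑(b/12%12) + ↑(a/12%12) * ↑(b/1728%12) := by
    rw [h1, ZMod.natCast_mod]; push_cast; ring
  have c2 : ((mulc 12 a b / 144 % 12 : ℕ) : ZMod 12)
      = ↑(a/144%12) * ↑(b%12) + ↑(a/1728%12) * ↑(b/144%12) := by
    rw [h2, ZMod.natCast_mod]; push_cast; ring
  have c3 : ((mulc 12 a b / 1728 % 12 : ℕ) : ZMod 12)
      = ↑(a/144%12) * ↑(b/12%12) + ↑(a/1728%12) * ↑(b/1728%12) := by
    rw [h3, ZMod.natCast_mod]; push_cast; ring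
  simp only [dec12]
  rw [Matrix.mul_fin_two, ← c0, ← c1, ← c2, ← c3]

lemma dec9_mul (a b : ℕ) : dec9 (mulc 9 a b) = dec9 a * dec9 b := by
  have h0 : mulc 9 a b % 9 = (a%9 * (b%9) + a/9%9 * (b/81%9)) % 9 := by
    simp only [mulc]; norm_num; omega
  have h1 : mulc 9 a b / 9 % 9 = (a%9 * (b/9%9) + a/9%9 * (b/729%9)) % 9 := by
    simp only [mulc]; norm_num; omega
  have h2 : mulc 9 a b / 81 % 9 = (a/81%9 * (b%9) + a/729%9 * (b/81%9)) % 9 := by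
    simp only [mulc]; norm_num; omega
  have h3 : mulc 9 a b / 729 % 9 = (a/81%9 * (b/9%9) + a/729%9 * (b/729%9)) % 9 := by
    simp only [mulc]; norm_num; omega
  have c0 : ((mulc 9 a b % 9 : ℕ) : ZMod 9)
      = ↑(a%9) * ↑(b%9) + ↑(a/9%9) * ↑(b/81%9) := by
    rw [h0, ZMod.natCast_mod]; push_cast; ring
  have c1 : ((mulc 9 a b / 9 % 9 : ℕ) : ZMod 9)
      = ↑(a%9) * ↑(b/9%9) + ↑(a/9%9) * ↑(b/729%9) := by
    rw [h1, ZMod.natCast_mod]; push_cast; ring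
  have c2 : ((mulc 9 a b / 81 % 9 : ℕ) : ZMod 9)
      = ↑(a/81%9) * ↑(b%9) + ↑(a/729%9) * ↑(b/81%9) := by
    rw [h2, ZMod.natCast_mod]; push_cast; ring
  have c3 : ((mulc 9 a b / 729 % 9 : ℕ) : ZMod 9)
      = ↑(a/81%9) * ↑(b/9%9) + ↑(a/729%9) * ↑(b/729%9) := by
    rw [h3, ZMod.natCast_mod]; push_cast; ring
  simp only [dec9]
  rw [Matrix.mul_fin_two, ← c0, ← c1, ← c2, ← c3]

lemma enc12_digits (u : Matrix (Fin 2) (Fin 2) (ZMod 12)) :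
    enc12 u % 12 = (u 0 0).val ∧ enc12 u / 12 % 12 = (u 0 1).val ∧
    enc12 u / 144 % 12 = (u 1 0).val ∧ enc12 u / 1728 % 12 = (u 1 1).val := by
  have h00 := (u 0 0).val_lt; have h01 := (u 0 1).val_lt
  have h10 := (u 1 0).val_lt; have h11 := (u 1 1).val_lt
  simp only [enc12]; omega

lemma enc9_digits (u : Matrix (Fin 2) (Fin 2) (ZMod 9)) :
    enc9 u % 9 = (u 0 0).val ∧ enc9 u / 9 % 9 = (u 0 1).val ∧
    enc9 u / 81 % 9 = (u 1 0).val ∧ enc9 u / 729 % 9 = (u 1 1).val := by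
  have h00 := (u 0 0).val_lt; have h01 := (u 0 1).val_lt
  have h10 := (u 1 0).val_lt; have h11 := (u 1 1).val_lt
  simp only [enc9]; omega

lemma enc12_mul (u v : Matrix (Fin 2) (Fin 2) (ZMod 12)) :
    enc12 (u * v) = mulc 12 (enc12 u) (enc12 v) := by
  obtain ⟨a0, a1, a2, a3⟩ := enc12_digits u
  obtain ⟨b0, b1, b2, b3⟩ := enc12_digits v
  have e : ∀ i j, (u * v) i j = u i 0 * v 0 j + u i 1 * v 1 j := by
    intro i j; rw [Matrix.mul_apply, Fin.sum_univ_two]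
  rw [mulc12_eq, a0, a1, a2, a3, b0, b1, b2, b3]
  simp only [enc12, e, ZMod.val_add, ZMod.val_mul]
  simp only [← Nat.add_mod]

lemma enc9_mul (u v : Matrix (Fin 2) (Fin 2) (ZMod 9)) :
    enc9 (u * v) = mulc 9 (enc9 u) (enc9 v) := by
  obtain ⟨a0, a1, a2, a3⟩ := enc9_digits u
  obtain ⟨b0, b1, b2, b3⟩ := enc9_digits v
  have e : ∀ i j, (u * v) i j = u i 0 * v 0 j + u i 1 * v 1 j := by
    intro i j; rw [Matrix.mul_apply, Fin.sum_univ_two]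
  rw [mulc9_eq, a0, a1, a2, a3, b0, b1, b2, b3]
  simp only [enc9, e, ZMod.val_add, ZMod.val_mul]
  simp only [← Nat.add_mod]

lemma enc12_dec12 (k : ℕ) :
    enc12 (dec12 k) = k%12 + 12*(k/12%12) + 144*(k/144%12) + 1728*(k/1728%12) := by
  have e00 : dec12 k 0 0 = ((k % 12 : ℕ) : ZMod 12) := rfl
  have e01 : dec12 k 0 1 = ((k / 12 % 12 : ℕ) : ZMod 12) := rfl
  have e10 : dec12 k 1 0 = ((k / 144 % 12 : ℕ) : ZMod 12) := rfl
  have e11 : dec12 k 1 1 = ((k / 1728 % 12 : ℕ) : ZMod 12) := rfl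
  simp only [enc12, e00, e01, e10, e11, ZMod.val_natCast]
  omega

lemma enc9_dec9 (k : ℕ) :
    enc9 (dec9 k) = k%9 + 9*(k/9%9) + 81*(k/81%9) + 729*(k/729%9) := by
  have e00 : dec9 k 0 0 = ((k % 9 : ℕ) : ZMod 9) := rfl
  have e01 : dec9 k 0 1 = ((k / 9 % 9 : ℕ) : ZMod 9) := rfl
  have e10 : dec9 k 1 0 = ((k / 81 % 9 : ℕ) : ZMod 9) := rfl
  have e11 : dec9 k 1 1 = ((k / 729 % 9 : ℕ) : ZMod 9) := rfl
  simp only [enc9, e00, e01, e10, e11, ZMod.val_natCast]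
  omega

lemma trc12_eq (k : ℕ) : trc 12 k = (dec12 k 0 0 + dec12 k 1 1).val := by
  have e00 : dec12 k 0 0 = ((k % 12 : ℕ) : ZMod 12) := rfl
  have e11 : dec12 k 1 1 = ((k / 1728 % 12 : ℕ) : ZMod 12) := rfl
  rw [e00, e11, ZMod.val_add, ZMod.val_natCast, ZMod.val_natCast]
  simp only [trc]; omega

lemma trc9_eq (k : ℕ) : trc 9 k = (dec9 k 0 0 + dec9 k 1 1).val := by
  have e00 : dec9 k 0 0 = ((k % 9 : ℕ) : ZMod 9) := rfl
  have e11 : dec9 k 1 1 = ((k / 729 % 9 : ℕ) : ZMod 9) := rfl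
  rw [e00, e11, ZMod.val_add, ZMod.val_natCast, ZMod.val_natCast]
  simp only [trc]; omega
def C12 : List Nat := [279, 807, 1071, 1599, 1729, 1886, 2045, 2206, 2357, 2510, 2665, 2822, 2981, 3142, 3293, 3446, 3613, 3929, 4237, 4549, 4865, 5173, 5460, 5523, 5787, 5988, 6252, 6459, 6723, 6780, 7151, 7459, 7775, 7943, 8251, 8567, 8645, 8806, 8953, 9110, 9265, 9430, 9581, 9742, 9889, 10046, 10201, 10366, 10581, 11109, 11517, 12045, 12175, 12332, 12491, 12640, 12803, 12956, 12967, 13124, 13283, 13432, 13595, 13748, 14059, 14375, 14683, 14851, 15167, 15475, 15762, 15969, 16233, 16290, 16698, 16761, 17025, 17226, 17441, 17749, 18065, 18377, 18685, 19001, 19091, 19240, 19399, 19556, 19711, 19864, 19883, 20032, 20191, 20348, 20503, 20656]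

def C9 : List Nat := [153, 156, 159, 198, 201, 204, 342, 345, 348, 468, 471, 474, 612, 615, 618, 657, 660, 663, 730, 757, 784, 821, 851, 881, 914, 938, 971, 973, 1000, 1027, 1067, 1097, 1118, 1154, 1187, 1211, 1216, 1243, 1270, 1313, 1334, 1364, 1403, 1427, 1451, 1463, 1490, 1517, 1549, 1582, 1606, 1645, 1666, 1696, 1706, 1733, 1760, 1798, 1822, 1846, 1882, 1912, 1942, 1949, 1976, 2003, 2038, 2062, 2095, 2128, 2158, 2179, 2340, 2343, 2346, 2385, 2388, 2391, 2529, 2532, 2535, 2655, 2658, 2661, 2799, 2802, 2805, 2844, 2847, 2850, 2923, 2950, 2977, 3011, 3041, 3062, 3104, 3128, 3152, 3166, 3193, 3220, 3257, 3278, 3308, 3344, 3368, 3401, 3409, 3436, 3463, 3494, 3524, 3554, 3584, 3617, 3641, 3647, 3674, 3701, 3739, 3763, 3796, 3826, 3856, 3886, 3890, 3917, 3944, 3979, 4012, 4036, 4072, 4102, 4123, 4133, 4160, 4187, 4228, 4252, 4276, 4318, 4339, 4369, 4527, 4530, 4533, 4572, 4575, 4578, 4716, 4719, 4722, 4842, 4845,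 4848, 4986, 4989, 4992, 5031, 5034, 5037, 5107, 5134, 5161, 5201, 5222, 5252, 5285, 5318, 5342, 5350, 5377, 5404, 5438, 5468, 5498, 5534, 5558, 5582, 5593, 5620, 5647, 5684, 5714, 5735, 5774, 5798, 5831, 5840, 5867, 5894, 5929, 5953, 5977, 6016, 6046, 6067, 6083, 6110, 6137, 6169, 6193, 6226, 6262, 6283, 6313, 6326, 6353, 6380, 6409, 6442, 6466, 6499, 6529, 6559]

section DecideFacts

set_option maxRecDepth 100000

lemma cid12 : (1729 : ℕ) ∈ C12 := by decide
lemma cid9 : (730 : ℕ) ∈ C9 := by decide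

lemma cgen12A : ∀ k ∈ C12, mulc 12 k 1886 ∈ C12 := by decide
lemma cgen12B : ∀ k ∈ C12, mulc 12 k 3613 ∈ C12 := by decide
lemma cgen12A' : ∀ k ∈ C12, mulc 12 k 5173 ∈ C12 := by decide
lemma cgen12B' : ∀ k ∈ C12, mulc 12 k 3446 ∈ C12 := by decide
lemma cgen9A : ∀ k ∈ C9, mulc 9 k 821 ∈ C9 := by decide
lemma cgen9B : ∀ k ∈ C9, mulc 9 k 1549 ∈ C9 := by decide
lemma cgen9A' : ∀ k ∈ C9, mulc 9 k 2179 ∈ C9 := by decide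
lemma cgen9B' : ∀ k ∈ C9, mulc 9 k 1451 ∈ C9 := by decide

lemma ccanon12 : ∀ k ∈ C12, k%12 + 12*(k/12%12) + 144*(k/144%12) + 1728*(k/1728%12) = k := by
  decide
lemma ccanon9 : ∀ k ∈ C9, k%9 + 9*(k/9%9) + 81*(k/81%9) + 729*(k/729%9) = k := by
  decide

lemma cneg12 : ∀ k ∈ C12, k ≠ 19019 := by decide
lemma c4fact : ∀ k ∈ C12, ¬(mulc 12 k k = 19019 ∧ trc 12 k = 0) := by decide
lemma c6fact : ∀ k ∈ C12, ¬(mulc 12 k (mulc 12 k k) = 19019 ∧ trc 12 k = 1) := by decide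
lemma c3fact : ∀ k ∈ C9, ¬(mulc 9 k (mulc 9 k k) = 730 ∧ trc 9 k = 8) := by decide

end DecideFacts

/-! ### Reduction homomorphisms -/

def rr12 : M2Z →+* Matrix (Fin 2) (Fin 2) (ZMod 12) := (Int.castRingHom (ZMod 12)).mapMatrix
def rr9 : M2Z →+* Matrix (Fin 2) (Fin 2) (ZMod 9) := (Int.castRingHom (ZMod 9)).mapMatrix

lemma dec12_one : dec12 1729 = 1 := by decide
lemma dec9_one : dec9 730 = 1 := by decide
lemma enc12_negone : enc12 (-1) = 19019 := by decide
lemma enc9_one : enc9 1 = 730 := by decide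
lemma enc12_one : enc12 1 = 1729 := by decide

lemma rr12_Az : rr12 (↑Az) = dec12 1886 := by
  ext i j; fin_cases i <;> fin_cases j <;> rfl
lemma rr12_Bz : rr12 (↑Bz) = dec12 3613 := by
  ext i j; fin_cases i <;> fin_cases j <;> rfl
lemma rr12_Az' : rr12 (↑Az') = dec12 5173 := by
  ext i j; fin_cases i <;> fin_cases j <;> rfl
lemma rr12_Bz' : rr12 (↑Bz') = dec12 3446 := by
  ext i j; fin_cases i <;> fin_cases j <;> rfl
lemma rr9_Az : rr9 (↑Az) = dec9 821 := by
  ext i j; fin_cases i <;> fin_cases j <;> rfl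
lemma rr9_Bz : rr9 (↑Bz) = dec9 1549 := by
  ext i j; fin_cases i <;> fin_cases j <;> rfl
lemma rr9_Az' : rr9 (↑Az') = dec9 2179 := by
  ext i j; fin_cases i <;> fin_cases j <;> rfl
lemma rr9_Bz' : rr9 (↑Bz') = dec9 1451 := by
  ext i j; fin_cases i <;> fin_cases j <;> rfl

/-! ### Invariant predicate -/

def P12 (u : Matrix (Fin 2) (Fin 2) (ZMod 12)) : Prop :=
  ∀ k ∈ C12, ∃ k', k' ∈ C12 ∧ dec12 k' = dec12 k * u

def P9 (u : Matrix (Fin 2) (Fin 2) (ZMod 9)) : Prop :=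
  ∀ k ∈ C9, ∃ k', k' ∈ C9 ∧ dec9 k' = dec9 k * u

lemma P12_code (g : ℕ) (hg : ∀ k ∈ C12, mulc 12 k g ∈ C12) : P12 (dec12 g) :=
  fun k hk => ⟨mulc 12 k g, hg k hk, dec12_mul k g⟩

lemma P9_code (g : ℕ) (hg : ∀ k ∈ C9, mulc 9 k g ∈ C9) : P9 (dec9 g) :=
  fun k hk => ⟨mulc 9 k g, hg k hk, dec9_mul k g⟩

lemma P12_one : P12 1 := fun k hk => ⟨k, hk, (mul_one _).symm⟩
lemma P9_one : P9 1 := fun k hk => ⟨k, hk, (mul_one _).symm⟩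

lemma P12_mul {u v} (hu : P12 u) (hv : P12 v) : P12 (u * v) := by
  intro k hk
  obtain ⟨k', hk', e⟩ := hu k hk
  obtain ⟨k'', hk'', e'⟩ := hv k' hk'
  exact ⟨k'', hk'', by rw [e', e, mul_assoc]⟩

lemma P9_mul {u v} (hu : P9 u) (hv : P9 v) : P9 (u * v) := by
  intro k hk
  obtain ⟨k', hk', e⟩ := hu k hk
  obtain ⟨k'', hk'', e'⟩ := hv k' hk'
  exact ⟨k'', hk'', by rw [e', e, mul_assoc]⟩

def Qz (y : Matrix.SpecialLinearGroup (Fin 2) ℤ) : Prop :=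
  P12 (rr12 ↑y) ∧ P12 (rr12 ↑(y⁻¹)) ∧ P9 (rr9 ↑y) ∧ P9 (rr9 ↑(y⁻¹))

lemma Qz_closure : ∀ y ∈ Subgroup.closure {Az, Bz}, Qz y := by
  intro y hy
  refine Subgroup.closure_induction (fun x hx => ?_) ?_ (fun x z _ _ ihx ihz => ?_)
    (fun x _ ihx => ?_) hy
  · rcases hx with h | h
    · subst h
      exact ⟨by rw [rr12_Az]; exact P12_code _ cgen12A,
        by rw [Az_inv, rr12_Az']; exact P12_code _ cgen12A',
        by rw [rr9_Az]; exact P9_code _ cgen9A,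
        by rw [Az_inv, rr9_Az']; exact P9_code _ cgen9A'⟩
    · rw [Set.mem_singleton_iff] at h; subst h
      exact ⟨by rw [rr12_Bz]; exact P12_code _ cgen12B,
        by rw [Bz_inv, rr12_Bz']; exact P12_code _ cgen12B',
        by rw [rr9_Bz]; exact P9_code _ cgen9B,
        by rw [Bz_inv, rr9_Bz']; exact P9_code _ cgen9B'⟩
  · constructor
    · rw [Matrix.SpecialLinearGroup.coe_one, _root_.map_one]; exact P12_one
    constructor
    · rw [inv_one, Matrix.SpecialLinearGroup.coe_one, _root_.map_one]; exact P12_one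
    constructor
    · rw [Matrix.SpecialLinearGroup.coe_one, _root_.map_one]; exact P9_one
    · rw [inv_one, Matrix.SpecialLinearGroup.coe_one, _root_.map_one]; exact P9_one
  · obtain ⟨hx1, hx2, hx3, hx4⟩ := ihx
    obtain ⟨hz1, hz2, hz3, hz4⟩ := ihz
    refine ⟨?_, ?_, ?_, ?_⟩
    · rw [Matrix.SpecialLinearGroup.coe_mul, _root_.map_mul]; exact P12_mul hx1 hz1
    · rw [_root_.mul_inv_rev, Matrix.SpecialLinearGroup.coe_mul, _root_.map_mul]; exact P12_mul hz2 hx2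
    · rw [Matrix.SpecialLinearGroup.coe_mul, _root_.map_mul]; exact P9_mul hx3 hz3
    · rw [_root_.mul_inv_rev, Matrix.SpecialLinearGroup.coe_mul, _root_.map_mul]; exact P9_mul hz4 hx4
  · obtain ⟨hx1, hx2, hx3, hx4⟩ := ihx
    exact ⟨hx2, by rw [inv_inv]; exact hx1, hx4, by rw [inv_inv]; exact hx3⟩

lemma codes_of_mem (y : Matrix.SpecialLinearGroup (Fin 2) ℤ)
    (hy : y ∈ Subgroup.closure {Az, Bz}) :
    (∃ k, k ∈ C12 ∧ dec12 k = rr12 ↑y) ∧ (∃ k, k ∈ C9 ∧ dec9 k = rr9 ↑y) := by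
  obtain ⟨h12, -, h9, -⟩ := Qz_closure y hy
  constructor
  · obtain ⟨k', hk', e⟩ := h12 1729 cid12
    exact ⟨k', hk', by rw [e, dec12_one, one_mul]⟩
  · obtain ⟨k', hk', e⟩ := h9 730 cid9
    exact ⟨k', hk', by rw [e, dec9_one, one_mul]⟩

/-! ### Integer 2×2 matrix lemmas -/

lemma one_e00 : (1 : M2Z) 0 0 = 1 := Matrix.one_apply_eq _
lemma one_e11 : (1 : M2Z) 1 1 = 1 := Matrix.one_apply_eq _
lemma one_e01 : (1 : M2Z) 0 1 = 0 := Matrix.one_apply_ne (by decide)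
lemma one_e10 : (1 : M2Z) 1 0 = 0 := Matrix.one_apply_ne (by decide)

lemma ch2 (C : M2Z) (h : C 0 0 * C 1 1 - C 0 1 * C 1 0 = 1) :
    C * C = (C 0 0 + C 1 1) • C - 1 := by
  rw [← Matrix.ext_iff]
  simp only [Fin.forall_fin_two, Matrix.mul_apply, Fin.sum_univ_two, Matrix.sub_apply,
    Matrix.smul_apply, smul_eq_mul, one_e00, one_e01, one_e10, one_e11]
  refine ⟨⟨?_, ?_⟩, ?_, ?_⟩
  · linear_combination -h
  · ring
  · ring
  · linear_combination -h

def pseq (t : ℤ) : ℕ → ℤ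
  | 0 => 0
  | 1 => 1
  | n+2 => t * pseq t (n+1) - pseq t n

lemma pseq_lt (t : ℤ) (ht : 3 ≤ t) : ∀ n : ℕ, pseq t n < pseq t (n+1) ∧ 0 ≤ pseq t n := by
  intro n
  induction n with
  | zero => simp [pseq]
  | succ n ih =>
    obtain ⟨h1, h2⟩ := ih
    have hp2 : pseq t (n+2) = t * pseq t (n+1) - pseq t n := by simp [pseq]
    refine ⟨?_, by linarith⟩
    rw [hp2]; nlinarith

lemma pow_f (C : M2Z) (t : ℤ) (hch : C * C = t • C - 1) :
    ∀ n : ℕ, C ^ (n+1) = pseq t (n+1) • C - pseq t n • (1 : M2Z) := by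
  intro n
  induction n with
  | zero => simp [pseq]
  | succ n ih =>
    have h1 : C ^ (n+1+1) = C ^ (n+1) * C := pow_succ C (n+1)
    have hp : pseq t (n+2) = t * pseq t (n+1) - pseq t n := by simp [pseq]
    rw [h1, ih, sub_mul, smul_mul_assoc, smul_mul_assoc, hch, one_mul, hp, smul_sub, smul_smul]
    module

lemma no_big (C : M2Z) (hdet : C 0 0 * C 1 1 - C 0 1 * C 1 0 = 1)
    (htr : 3 ≤ C 0 0 + C 1 1) {n : ℕ} (hn : 0 < n) (hpow : C ^ n = 1) : False := by
  set t := C 0 0 + C 1 1 with htdef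
  have hch := ch2 C hdet
  obtain ⟨m, rfl⟩ : ∃ m, n = m + 1 := ⟨n - 1, by omega⟩
  have hf := (pow_f C t hch m).symm.trans hpow
  have hm := pseq_lt t htr m
  have hp1 : 1 ≤ pseq t (m+1) := by linarith [hm.1, hm.2]
  have ent : ∀ i j, pseq t (m+1) * C i j - pseq t m * (1 : M2Z) i j = (1 : M2Z) i j := by
    intro i j
    have h := congrFun (congrFun hf i) j
    simpa only [Matrix.sub_apply, Matrix.smul_apply, smul_eq_mul] using h
  have e00 := ent 0 0; rw [one_e00] at e00
  have e01 := ent 0 1; rw [one_e01] at e01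
  have e10 := ent 1 0; rw [one_e10] at e10
  have e11 := ent 1 1; rw [one_e11] at e11
  have hb : C 0 1 = 0 := by
    have h1 : pseq t (m+1) * C 0 1 = 0 := by linarith
    rcases mul_eq_zero.mp h1 with h | h
    · exact absurd h (by omega)
    · exact h
  have hc : C 1 0 = 0 := by
    have h1 : pseq t (m+1) * C 1 0 = 0 := by linarith
    rcases mul_eq_zero.mp h1 with h | h
    · exact absurd h (by omega)
    · exact h
  have had : C 0 0 = C 1 1 := by
    have h1 : pseq t (m+1) * (C 0 0 - C 1 1) = 0 := by linear_combination e00 - e11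
    rcases mul_eq_zero.mp h1 with h | h
    · exact absurd h (by omega)
    · linarith
  have hmul : C 0 0 * C 1 1 = 1 := by rw [hb, hc] at hdet; linarith
  have hge : 2 ≤ C 0 0 := by omega
  nlinarith

lemma tr_two (C : M2Z) (hdet : C 0 0 * C 1 1 - C 0 1 * C 1 0 = 1)
    (htr : C 0 0 + C 1 1 = 2) {n : ℕ} (hn : 0 < n) (hpow : C ^ n = 1) : C = 1 := by
  set N := C - 1 with hNdef
  have hC : C = 1 + N := by rw [hNdef]; abel
  have hN2 : N * N = 0 := by
    have hch := ch2 C hdet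
    rw [htr] at hch
    have expand : N * N = C * C - C - C + 1 := by rw [hNdef]; noncomm_ring
    rw [expand, hch, two_smul]
    abel
  have key : ∀ m : ℕ, C ^ m = 1 + (m : ℤ) • N := by
    intro m
    induction m with
    | zero => simp
    | succ m ih =>
      rw [pow_succ, ih]
      nth_rewrite 1 [hC]
      rw [mul_add, mul_one, add_mul, one_mul, smul_mul_assoc, hN2, smul_zero, add_zero]
      push_cast
      rw [add_smul, one_smul]
      abel
  have h1 := (key n).symm.trans hpow
  have hN0 : ((n : ℤ)) • N = 0 := by rwa [add_eq_left] at h1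
  have hNz : N = 0 := by
    ext i j
    have h2 := congrFun (congrFun hN0 i) j
    simp only [Matrix.smul_apply, smul_eq_mul, Matrix.zero_apply] at h2 ⊢
    rcases mul_eq_zero.mp h2 with h | h
    · exact absurd h (by exact_mod_cast hn.ne')
    · exact h
  have hsub : C - 1 = 0 := by rw [← hNdef]; exact hNz
  exact sub_eq_zero.mp hsub

/-! ### Entries of reductions -/

lemma rr12_entry (C : M2Z) (i j : Fin 2) : rr12 C i j = ((C i j : ℤ) : ZMod 12) := rfl
lemma rr9_entry (C : M2Z) (i j : Fin 2) : rr9 C i j = ((C i j : ℤ) : ZMod 9) := rfl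

/-! ### The key theorem over ℤ -/

lemma keyZ (y : Matrix.SpecialLinearGroup (Fin 2) ℤ) (hy : y ∈ Subgroup.closure {Az, Bz})
    {n : ℕ} (hn : 0 < n) (hyn : y ^ n = 1) : y = 1 := by
  have hdet : (↑y : M2Z) 0 0 * (↑y : M2Z) 1 1 - (↑y : M2Z) 0 1 * (↑y : M2Z) 1 0 = 1 := by
    have h := y.prop
    rwa [Matrix.det_fin_two] at h
  have hCn : (↑y : M2Z) ^ n = 1 := by
    rw [← Matrix.SpecialLinearGroup.coe_pow, hyn, Matrix.SpecialLinearGroup.coe_one]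
  set C : M2Z := (↑y : M2Z) with hCdef
  obtain ⟨⟨k12, hk12, hdk12⟩, ⟨k9, hk9, hdk9⟩⟩ := codes_of_mem y hy
  set t := C 0 0 + C 1 1 with htdef
  -- dispose of |t| ≥ 3
  rcases le_or_gt 3 t with h3 | h3
  · exact absurd hCn (fun h => no_big C hdet h3 hn h)
  rcases le_or_gt t (-3) with h4 | h4
  · exfalso
    have hdet' : (-C) 0 0 * (-C) 1 1 - (-C) 0 1 * (-C) 1 0 = 1 := by
      simp only [Matrix.neg_apply]; linear_combination hdet
    have htr' : 3 ≤ (-C) 0 0 + (-C) 1 1 := by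
      simp only [Matrix.neg_apply]; linarith
    have hp : (-C) ^ (2*n) = 1 := by
      rw [neg_pow, Even.neg_one_pow (even_two_mul n), one_mul, mul_comm, pow_mul, hCn, one_pow]
    exact no_big (-C) hdet' htr' (by omega) hp
  have ht5 : t = -2 ∨ t = -1 ∨ t = 0 ∨ t = 1 ∨ t = 2 := by omega
  have trace12 : rr12 C 0 0 + rr12 C 1 1 = ((t : ℤ) : ZMod 12) := by
    rw [rr12_entry, rr12_entry, htdef]; push_cast; ring
  have trace9 : rr9 C 0 0 + rr9 C 1 1 = ((t : ℤ) : ZMod 9) := by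
    rw [rr9_entry, rr9_entry, htdef]; push_cast; ring
  rcases ht5 with ht | ht | ht | ht | ht
  · -- t = -2 : C = -1, contradiction mod 12
    exfalso
    have hdet' : (-C) 0 0 * (-C) 1 1 - (-C) 0 1 * (-C) 1 0 = 1 := by
      simp only [Matrix.neg_apply]; linear_combination hdet
    have htr' : (-C) 0 0 + (-C) 1 1 = 2 := by
      simp only [Matrix.neg_apply]; linarith
    have hp : (-C) ^ (2*n) = 1 := by
      rw [neg_pow, Even.neg_one_pow (even_two_mul n), one_mul, mul_comm, pow_mul, hCn, one_pow]
    have hC1 := tr_two (-C) hdet' htr' (by omega) hp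
    have hCneg : C = -1 := by
      have := congrArg Neg.neg hC1
      rwa [neg_neg] at this
    have hdkneg : dec12 k12 = -1 := by rw [hdk12, ← hCdef, hCneg, map_neg, _root_.map_one]
    have hk : k12 = 19019 := by
      have e1 := ccanon12 k12 hk12
      have e2 : enc12 (dec12 k12) = enc12 (-1 : Matrix (Fin 2) (Fin 2) (ZMod 12)) := by
        rw [hdkneg]
      rw [enc12_dec12, enc12_negone] at e2
      omega
    exact cneg12 k12 hk12 hk
  · -- t = -1 : C³ = 1, contradiction mod 9
    exfalso
    have hch := ch2 C hdet
    rw [← htdef, ht] at hch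
    have h2 : C * C = -C - 1 := by rw [hch, neg_smul, one_smul]
    have h3' : C * (C * C) = 1 := by
      rw [h2, mul_sub, mul_neg, mul_one, h2]
      abel
    have hu : dec9 k9 * (dec9 k9 * dec9 k9) = 1 := by
      rw [hdk9, ← _root_.map_mul, ← _root_.map_mul, ← hCdef, h3', _root_.map_one]
    have hcode : mulc 9 k9 (mulc 9 k9 k9) = 730 := by
      have e := congrArg enc9 hu
      rw [enc9_mul, enc9_mul, enc9_one, enc9_dec9, ccanon9 k9 hk9] at e
      exact e
    have htrc : trc 9 k9 = 8 := by
      rw [trc9_eq, hdk9, ← hCdef, trace9, ht]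
      decide
    exact c3fact k9 hk9 ⟨hcode, htrc⟩
  · -- t = 0 : C² = -1, contradiction mod 12
    exfalso
    have hch := ch2 C hdet
    rw [← htdef, ht] at hch
    have h2 : C * C = -1 := by rw [hch, zero_smul, zero_sub]
    have hu : dec12 k12 * dec12 k12 = -1 := by
      rw [hdk12, ← _root_.map_mul, ← hCdef, h2, map_neg, _root_.map_one]
    have hcode : mulc 12 k12 k12 = 19019 := by
      have e := congrArg enc12 hu
      rw [enc12_mul, enc12_negone, enc12_dec12, ccanon12 k12 hk12] at e
      exact e
    have htrc : trc 12 k12 = 0 := by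
      rw [trc12_eq, hdk12, ← hCdef, trace12, ht]
      decide
    exact c4fact k12 hk12 ⟨hcode, htrc⟩
  · -- t = 1 : C³ = -1, contradiction mod 12
    exfalso
    have hch := ch2 C hdet
    rw [← htdef, ht] at hch
    have h2 : C * C = C - 1 := by rw [hch, one_smul]
    have h3' : C * (C * C) = -1 := by
      rw [h2, mul_sub, mul_one, h2]
      abel
    have hu : dec12 k12 * (dec12 k12 * dec12 k12) = -1 := by
      rw [hdk12, ← _root_.map_mul, ← _root_.map_mul, ← hCdef, h3', map_neg, _root_.map_one]
    have hcode : mulc 12 k12 (mulc 12 k12 k12) = 19019 := by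
      have e := congrArg enc12 hu
      rw [enc12_mul, enc12_mul, enc12_negone, enc12_dec12, ccanon12 k12 hk12] at e
      exact e
    have htrc : trc 12 k12 = 1 := by
      rw [trc12_eq, hdk12, ← hCdef, trace12, ht]
      decide
    exact c6fact k12 hk12 ⟨hcode, htrc⟩
  · -- t = 2 : C = 1
    have hC1 : C = 1 := tr_two C hdet (by omega) hn hCn
    exact Subtype.coe_injective (show ((y : M2Z)) = ((1 : Matrix.SpecialLinearGroup (Fin 2) ℤ) : M2Z) by
      rw [Matrix.SpecialLinearGroup.coe_one, ← hCdef]; exact hC1)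

/-! ### From ℤ to ℝ -/

def fmap : Matrix.SpecialLinearGroup (Fin 2) ℤ →* Matrix.SpecialLinearGroup (Fin 2) ℝ :=
  Matrix.SpecialLinearGroup.map (Int.castRingHom ℝ)

lemma fmap_coe (z : Matrix.SpecialLinearGroup (Fin 2) ℤ) :
    ((fmap z : Matrix.SpecialLinearGroup (Fin 2) ℝ) : Matrix (Fin 2) (Fin 2) ℝ)
      = (z : Matrix (Fin 2) (Fin 2) ℤ).map (Int.cast : ℤ → ℝ) :=
  rfl

lemma fmap_Az : fmap Az = matA := by
  ext i j
  rw [fmap_coe]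
  fin_cases i <;> fin_cases j <;>
    simp [fmap_coe, Az, matA, Matrix.map_apply]

lemma fmap_Bz : fmap Bz = matB := by
  ext i j
  rw [fmap_coe]
  fin_cases i <;> fin_cases j <;>
    simp [fmap_coe, Bz, matB, Matrix.map_apply]

lemma closure_le_map :
    Subgroup.closure {matA, matB} ≤
      Subgroup.map fmap (Subgroup.closure {Az, Bz}) := by
  rw [Subgroup.closure_le]
  intro x hx
  rcases hx with h | h
  · exact ⟨Az, Subgroup.subset_closure (Set.mem_insert _ _), by rw [h]; exact fmap_Az⟩
  · rw [Set.mem_singleton_iff] at h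
    exact ⟨Bz, Subgroup.subset_closure (Set.mem_insert_of_mem _ rfl), by rw [h]; exact fmap_Bz⟩

lemma fmap_eq_one {z : Matrix.SpecialLinearGroup (Fin 2) ℤ} (h : fmap z = 1) : z = 1 := by
  apply Subtype.coe_injective
  show (z : Matrix (Fin 2) (Fin 2) ℤ)
      = ((1 : Matrix.SpecialLinearGroup (Fin 2) ℤ) : Matrix (Fin 2) (Fin 2) ℤ)
  rw [Matrix.SpecialLinearGroup.coe_one]
  ext i j
  have h2 : ((fmap z : Matrix.SpecialLinearGroup (Fin 2) ℝ) : Matrix (Fin 2) (Fin 2) ℝ) i j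
      = (1 : Matrix (Fin 2) (Fin 2) ℝ) i j := by
    rw [h, Matrix.SpecialLinearGroup.coe_one]
  rw [fmap_coe, Matrix.map_apply] at h2
  by_cases hij : i = j
  · subst hij
    rw [Matrix.one_apply_eq] at h2 ⊢
    exact_mod_cast h2
  · rw [Matrix.one_apply_ne hij] at h2 ⊢
    exact_mod_cast h2

/-! ### Main theorem -/

/-- The matrices `A = [[2,1],[1,1]]` and `B = [[1,1],[1,2]]` generate a discrete subgroup
of `SL(2,ℝ)` (its image in the space of matrices is a discrete subspace); in particular the
subgroup they generate is torsion-free: it contains no nontrivial elements of finite order. -/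
theorem matA_matB_generate_discrete_torsionFree :
    DiscreteTopology
      ((fun x : Matrix.SpecialLinearGroup (Fin 2) ℝ => (x : Matrix (Fin 2) (Fin 2) ℝ)) ''
        (Subgroup.closure {matA, matB} : Subgroup (Matrix.SpecialLinearGroup (Fin 2) ℝ)) :
        Set (Matrix (Fin 2) (Fin 2) ℝ)) ∧
    ∀ x ∈ Subgroup.closure {matA, matB}, IsOfFinOrder x → x = 1 := by
  constructor
  · set S : Set (Matrix (Fin 2) (Fin 2) ℝ) :=
      (fun x : Matrix.SpecialLinearGroup (Fin 2) ℝ => (x : Matrix (Fin 2) (Fin 2) ℝ)) ''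
        (Subgroup.closure {matA, matB} : Subgroup (Matrix.SpecialLinearGroup (Fin 2) ℝ))
      with hSdef
    have hint : ∀ s ∈ S, ∀ i j, ∃ z : ℤ, s i j = (z : ℝ) := by
      rintro s ⟨x, hx, rfl⟩ i j
      obtain ⟨y, hy, rfl⟩ := Subgroup.mem_map.mp (closure_le_map hx)
      refine ⟨(y : Matrix (Fin 2) (Fin 2) ℤ) i j, ?_⟩
      show ((fmap y : Matrix.SpecialLinearGroup (Fin 2) ℝ) : Matrix (Fin 2) (Fin 2) ℝ) i j = _
      rw [fmap_coe, Matrix.map_apply]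
    refine discreteTopology_iff_isOpen_singleton.mpr ?_
    rintro ⟨x, hx⟩
    set U : Set (Matrix (Fin 2) (Fin 2) ℝ) :=
      ⋂ i, ⋂ j, (fun m : Matrix (Fin 2) (Fin 2) ℝ => m i j) ⁻¹' Metric.ball (x i j) 1 with hUdef
    have hU : IsOpen U := by
      refine isOpen_iInter_of_finite fun i => isOpen_iInter_of_finite fun j => ?_
      exact Metric.isOpen_ball.preimage ((continuous_apply j).comp (continuous_apply i))
    have heq : (Subtype.val ⁻¹' U : Set S) = {⟨x, hx⟩} := by
      ext ⟨s, hs⟩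
      simp only [Set.mem_preimage, Set.mem_singleton_iff, Subtype.mk.injEq]
      constructor
      · intro hsU
        ext i j
        obtain ⟨zs, hzs⟩ := hint s hs i j
        obtain ⟨zx, hzx⟩ := hint x hx i j
        have hball : s i j ∈ Metric.ball (x i j) 1 := by
          have h1 := Set.mem_iInter.mp (Set.mem_iInter.mp hsU i) j
          exact h1
        rw [Metric.mem_ball, Real.dist_eq, hzs, hzx] at hball
        have hz : zs = zx := by
          by_contra hne
          have h1 : (1 : ℝ) ≤ |(zs : ℝ) - (zx : ℝ)| := by
            rw [← Int.cast_sub, ← Int.cast_abs]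
            exact_mod_cast Int.one_le_abs (sub_ne_zero.mpr hne)
          linarith
        rw [hzs, hzx, hz]
      · rintro rfl
        refine Set.mem_iInter.mpr fun i => Set.mem_iInter.mpr fun j => ?_
        simp [Metric.mem_ball]
    have hopen : IsOpen (Subtype.val ⁻¹' U : Set S) := hU.preimage continuous_subtype_val
    rw [heq] at hopen
    exact hopen
  · intro x hx hfin
    obtain ⟨y, hy, rfl⟩ := Subgroup.mem_map.mp (closure_le_map hx)
    obtain ⟨n, hn, hxn⟩ := isOfFinOrder_iff_pow_eq_one.mp hfin
    have hyn : y ^ n = 1 := fmap_eq_one (by rw [_root_.map_pow, hxn])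
    rw [keyZ y hy hn hyn, _root_.map_one]
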